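/- arXiv:2006.05192 — 11 statements merged into one kernel-verified Lean document; each statement's English description precedes it below -/
import Mathlib

section
/- Let λ_1,...,λ_n be nonnegative real numbers such that for every k ∈ {1,...,n}, Σ_{i≠k} λ_i ≤ 1. Then Σ_{i=1}^n λ_i/(1+λ_i) ≤ 1. Moreover, if at least one of the inequalities Σ_{i≠k} λ_i ≤ 1 is strict, then Σ_{i=1}^n λ_i/(1+λ_i) < 1. -/
theorem stmt1 (n : ℕ) (lam : Fin n → ℝ) (h0 : ∀ i, 0 ≤ lam i)
    (h : ∀ k : Fin n, ∑ i ∈ Finset.univ.erase k, lam i ≤ 1) :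
    (∑ i, lam i / (1 + lam i) ≤ 1) ∧
    ((∃ k : Fin n, ∑ i ∈ Finset.univ.erase k, lam i < 1) →
      ∑ i, lam i / (1 + lam i) < 1) := by
  set S := ∑ i, lam i with hS
  have herase : ∀ k : Fin n, ∑ i ∈ Finset.univ.erase k, lam i = S - lam k := by
    intro k; rw [Finset.sum_erase_eq_sub (Finset.mem_univ k)]
  have hpos : ∀ i, 0 < 1 + lam i := fun i => by linarith [h0 i]
  by_cases hS1 : S < 1
  · have hle : ∀ i, lam i / (1 + lam i) ≤ lam i := by
      intro i
      rw [div_le_iff₀ (hpos i)]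
      nlinarith [h0 i]
    have hsum : ∑ i, lam i / (1 + lam i) ≤ S :=
      Finset.sum_le_sum (fun i _ => hle i)
    exact ⟨by linarith, fun _ => by linarith⟩
  · push_neg at hS1
    have hSpos : 0 < S := lt_of_lt_of_le one_pos hS1
    have hle : ∀ i, lam i / (1 + lam i) ≤ lam i / S := by
      intro i
      have hsi : S ≤ 1 + lam i := by have := h i; rw [herase i] at this; linarith
      rw [div_le_div_iff₀ (hpos i) hSpos]
      nlinarith [h0 i]
    have hsum1 : ∑ i, lam i / S = 1 := by
      rw [← Finset.sum_div, ← hS, div_self hSpos.ne']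
    constructor
    · calc ∑ i, lam i / (1 + lam i) ≤ ∑ i, lam i / S :=
            Finset.sum_le_sum (fun i _ => hle i)
        _ = 1 := hsum1
    · rintro ⟨k, hk⟩
      rw [herase k] at hk
      have hlk : 0 < lam k := by linarith
      have hlt : lam k / (1 + lam k) < lam k / S := by
        rw [div_lt_div_iff₀ (hpos k) hSpos]
        nlinarith
      calc ∑ i, lam i / (1 + lam i)
          < ∑ i, lam i / S :=
            Finset.sum_lt_sum (fun i _ => hle i) ⟨k, Finset.mem_univ k, hlt⟩
        _ = 1 := hsum1
end

section
/- Let A be the n×n matrix with a_{ii}=1 and a_{ij} = -λ_j for i≠j, with λ ≥ 0 componentwise. If A is singular and v* is a solution of Av = b with all coordinates strictly positive and v* ∈ [0,v̄]^n, then there exists a solution w of Aw = b with w ∈ [0,v̄]^n, w nonnegative in all coordinates, and at least one coordinate of w equal to zero. -/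
theorem stmt2 (n : ℕ) (vbar : ℝ) (hvbar : 0 < vbar)
    (lam b : Fin n → ℝ) (hlam : ∀ i, 0 ≤ lam i)
    (A : Matrix (Fin n) (Fin n) ℝ)
    (hA : A = Matrix.of fun i j => if i = j then 1 else -lam j)
    (hsing : A.det = 0)
    (vstar : Fin n → ℝ) (hsol : A.mulVec vstar = b)
    (hpos : ∀ i, 0 < vstar i) (hub : ∀ i, vstar i ≤ vbar) :
    ∃ w : Fin n → ℝ, A.mulVec w = b ∧ (∀ i, 0 ≤ w i ∧ w i ≤ vbar) ∧ ∃ i, w i = 0 := by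
  have hn : 0 < n := by
    rcases Nat.eq_zero_or_pos n with h | h
    · exfalso; subst h
      have : A.det = 1 := Matrix.det_fin_zero
      rw [this] at hsing; norm_num at hsing
    · exact h
  have hne : Nonempty (Fin n) := ⟨⟨0, hn⟩⟩
  obtain ⟨u, hu0, huA⟩ := (Matrix.exists_mulVec_eq_zero_iff).mpr hsing
  set s : ℝ := ∑ j, lam j * u j with hs
  have hposd : ∀ i, (0:ℝ) < 1 + lam i := fun i => by linarith [hlam i]
  have key : ∀ i, (1 + lam i) * u i = s := by
    intro i
    have h0 := congrFun huA i
    simp only [hA, Matrix.mulVec, dotProduct, Matrix.of_apply, Pi.zero_apply] at h0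
    have h1 : ∀ j ∈ Finset.univ, (if i = j then (1:ℝ) else -lam j) * u j
        = (if i = j then (1 + lam j) * u j else 0) - lam j * u j := by
      intro j _; by_cases h : i = j <;> simp [h] <;> ring
    rw [Finset.sum_congr rfl h1, Finset.sum_sub_distrib, Finset.sum_ite_eq] at h0
    simp at h0
    linarith [h0]
  have hs0 : s ≠ 0 := by
    intro h
    apply hu0
    funext i
    have := key i
    rw [h] at this
    have := mul_eq_zero.mp this
    rcases this with h' | h'
    · exact absurd h' (ne_of_gt (hposd i))
    · exact h'
  set p : Fin n → ℝ := s⁻¹ • u with hpdef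
  have hpA : A.mulVec p = 0 := by
    rw [hpdef, Matrix.mulVec_smul, huA, smul_zero]
  have hp : ∀ i, 0 < p i := by
    intro i
    have h1 : (1 + lam i) * p i = 1 := by
      simp only [hpdef, Pi.smul_apply, smul_eq_mul]
      field_simp
      exact key i
    have := hposd i
    nlinarith
  obtain ⟨i0, -, hmin⟩ := Finset.exists_min_image Finset.univ
    (fun i => vstar i / p i) ⟨Classical.arbitrary (Fin n), Finset.mem_univ _⟩
  set t : ℝ := vstar i0 / p i0 with ht
  have htpos : 0 < t := div_pos (hpos i0) (hp i0)
  refine ⟨vstar - t • p, ?_, ?_, ⟨i0, ?_⟩⟩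
  · rw [Matrix.mulVec_sub, hsol, Matrix.mulVec_smul, hpA, smul_zero, sub_zero]
  · intro i
    have hle : t ≤ vstar i / p i := hmin i (Finset.mem_univ i)
    have h1 : t * p i ≤ vstar i := (le_div_iff₀ (hp i)).mp hle
    have h2 : 0 < t * p i := mul_pos htpos (hp i)
    constructor
    · simp only [Pi.sub_apply, Pi.smul_apply, smul_eq_mul]; linarith
    · simp only [Pi.sub_apply, Pi.smul_apply, smul_eq_mul]; linarith [hub i]
  · simp only [Pi.sub_apply, Pi.smul_apply, smul_eq_mul, ht]
    rw [div_mul_cancel₀ _ (ne_of_gt (hp i0)), sub_self]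
end

section
/- Let A be the n×n matrix with a_{ii}=1 and a_{ij}=-λ_j for i≠j, where λ_i ≥ 0 for all i. If Σ_{i=1}^n λ_i/(1+λ_i) < 1 (so A is invertible), then all entries of A^{-1} are nonnegative. -/
theorem stmt3 (n : ℕ) (lam : Fin n → ℝ) (hlam : ∀ i, 0 ≤ lam i)
    (h : ∑ i, lam i / (1 + lam i) < 1)
    (A : Matrix (Fin n) (Fin n) ℝ)
    (hA : A = Matrix.of fun i j => if i = j then 1 else -lam j) :
    ∀ i j, 0 ≤ A⁻¹ i j := by
  have hpos : ∀ i, 0 < 1 + lam i := fun i => by linarith [hlam i]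
  set s := ∑ i, lam i / (1 + lam i) with hs
  have hs0 : 0 ≤ s := Finset.sum_nonneg fun i _ => div_nonneg (hlam i) (hpos i).le
  have hc : 0 < 1 - s := by linarith
  set B : Matrix (Fin n) (Fin n) ℝ := Matrix.of fun i j =>
    (if i = j then 1 / (1 + lam i) else 0) +
      lam j / ((1 + lam i) * (1 + lam j) * (1 - s)) with hB
  have hAB : A * B = 1 := by
    ext i k
    have h1 : ∀ j, A i j * B j k =
        (if i = j then (1 + lam j) * B j k else 0) - lam j * B j k := by
      intro j
      rw [hA]
      by_cases hij : i = j <;> simp [hij] <;> ring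
    have h2 : ∀ j, lam j * B j k =
        (if j = k then lam j / (1 + lam j) else 0) +
          (lam j / (1 + lam j)) * (lam k / ((1 + lam k) * (1 - s))) := by
      intro j
      have hj := (hpos j).ne'
      have hk := (hpos k).ne'
      have hcne := hc.ne'
      rw [hB]
      by_cases hjk : j = k
      · subst hjk
        simp only [Matrix.of_apply, if_pos rfl, if_true]
        field_simp
        try ring
      · simp only [Matrix.of_apply, if_neg hjk, zero_add]
        rw [div_mul_div_comm, mul_div_assoc', mul_assoc]
    have hsum : (A * B) i k =
        (1 + lam i) * B i k -
          (lam k / (1 + lam k) + s * (lam k / ((1 + lam k) * (1 - s)))) := by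
      rw [Matrix.mul_apply]
      simp_rw [h1, Finset.sum_sub_distrib, Finset.sum_ite_eq, Finset.mem_univ,
        if_true, h2, Finset.sum_add_distrib, Finset.sum_ite_eq', Finset.mem_univ,
        if_true, ← Finset.sum_mul]
      rfl
    have hi := (hpos i).ne'
    have hk := (hpos k).ne'
    have hcne := hc.ne'
    rw [hsum, hB]
    simp only [Matrix.of_apply, Matrix.one_apply]
    by_cases hik : i = k
    · subst hik
      rw [if_pos rfl, if_pos rfl]
      field_simp
      try ring
    · rw [if_neg hik, if_neg hik]
      field_simp
      try ring
  have hinv : A⁻¹ = B := Matrix.inv_eq_right_inv hAB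
  rw [hinv, hB]
  intro i j
  simp only [Matrix.of_apply]
  have t1 : (0:ℝ) ≤ if i = j then 1 / (1 + lam i) else 0 := by
    have := hpos i
    split <;> positivity
  have t2 : (0:ℝ) ≤ lam j / ((1 + lam i) * (1 + lam j) * (1 - s)) := by
    have := hlam j; have := hpos i; have := hpos j; positivity
  linarith
end

section
/- Let A be the n×n matrix with a_{ii}=1 and a_{ij}=-λ_j for i≠j, with λ_i ≥ 0 and Σ_{i=1}^n λ_i/(1+λ_i) ≠ 1. If v* is the unique solution of Av = b, then λ·v* = (Σ_{i=1}^n (λ_i/(1+λ_i)) b_i) / (1 - Σ_{i=1}^n λ_i/(1+λ_i)). -/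
theorem stmt4 (n : ℕ) (lam b : Fin n → ℝ) (hlam : ∀ i, 0 ≤ lam i)
    (h : ∑ i, lam i / (1 + lam i) ≠ 1)
    (A : Matrix (Fin n) (Fin n) ℝ)
    (hA : A = Matrix.of fun i j => if i = j then 1 else -lam j)
    (vstar : Fin n → ℝ) (hsol : A.mulVec vstar = b)
    (huniq : ∀ w, A.mulVec w = b → w = vstar) :
    ∑ i, lam i * vstar i =
      (∑ i, lam i / (1 + lam i) * b i) / (1 - ∑ i, lam i / (1 + lam i)) := by
  set S := ∑ i, lam i * vstar i with hS
  set T := ∑ i, lam i / (1 + lam i) with hT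
  have hpos : ∀ i, (0:ℝ) < 1 + lam i := fun i => by linarith [hlam i]
  have key : ∀ i, (1 + lam i) * vstar i = b i + S := by
    intro i
    have h1 : ∑ j, (if i = j then (1:ℝ) else -lam j) * vstar j = b i := by
      have := congrFun hsol i
      simpa [Matrix.mulVec, dotProduct, hA] using this
    have h2 : ∀ j ∈ Finset.univ, (if i = j then (1:ℝ) else -lam j) * vstar j
        = (if i = j then (1 + lam j) * vstar j else 0) - lam j * vstar j := by
      intro j _
      by_cases hij : i = j <;> simp [hij] <;> ring
    rw [Finset.sum_congr rfl h2, Finset.sum_sub_distrib, Finset.sum_ite_eq] at h1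
    simp at h1
    linarith [h1]
  have hstep : ∀ i, lam i * vstar i = lam i / (1 + lam i) * b i + lam i / (1 + lam i) * S := by
    intro i
    have hne := (hpos i).ne'
    field_simp
    linear_combination lam i * key i
  have hSeq : S = (∑ i, lam i / (1 + lam i) * b i) + T * S := by
    rw [hS]
    calc ∑ i, lam i * vstar i
        = ∑ i, (lam i / (1 + lam i) * b i + lam i / (1 + lam i) * S) :=
          Finset.sum_congr rfl fun i _ => hstep i
      _ = (∑ i, lam i / (1 + lam i) * b i) + (∑ i, lam i / (1 + lam i)) * S := by
          rw [Finset.sum_add_distrib, Finset.sum_mul]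
      _ = (∑ i, lam i / (1 + lam i) * b i) + T * S := by rw [hT]
  have hTne : (1 : ℝ) - T ≠ 0 := by
    intro hc
    exact h (by linarith)
  have hsum : ∑ i, lam i / (1 + lam i) * b i = ∑ i, lam i * b i / (1 + lam i) :=
    Finset.sum_congr rfl fun i _ => by ring
  field_simp
  linarith [hSeq, hsum]
end

section
/- Let A be the n×n matrix with a_{ii}=1 and a_{ij}=-λ_j for i≠j, where λ_i ≥ 0. Then the rank of A is at least n-1; equivalently, the kernel of A has dimension at most 1. -/
theorem stmt5 (n : ℕ) (lam : Fin n → ℝ) (hlam : ∀ i, 0 ≤ lam i)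
    (A : Matrix (Fin n) (Fin n) ℝ)
    (hA : A = Matrix.of fun i j => if i = j then 1 else -lam j) :
    n - 1 ≤ A.rank ∧ Module.finrank ℝ (LinearMap.ker A.mulVecLin) ≤ 1 := by
  -- key: for x in ker, (1 + lam i) * x i = ∑ j, lam j * x j
  have key : ∀ x : Fin n → ℝ, A.mulVec x = 0 →
      ∀ i, (1 + lam i) * x i = ∑ j, lam j * x j := by
    intro x hx i
    have h := congrFun hx i
    simp only [Matrix.mulVec, dotProduct, hA, Matrix.of_apply, Pi.zero_apply] at h
    have hsplit : ∀ j, (if i = j then (1:ℝ) else -lam j) * x j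
        = (if i = j then (1 + lam j) * x j else 0) - lam j * x j := by
      intro j; by_cases hij : i = j <;> simp [hij] <;> ring
    rw [Finset.sum_congr rfl (fun j _ => hsplit j), Finset.sum_sub_distrib,
      Finset.sum_ite_eq (Finset.univ) i (fun j => (1 + lam j) * x j)] at h
    simp at h
    linarith
  -- injective linear map from kernel to ℝ
  let φ : (LinearMap.ker A.mulVecLin) →ₗ[ℝ] ℝ :=
    { toFun := fun x => ∑ j, lam j * (x : Fin n → ℝ) j
      map_add' := by
        intro x y
        simp [Finset.sum_add_distrib, mul_add]
      map_smul' := by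
        intro c x
        simp [Finset.mul_sum]
        ring_nf
        apply Finset.sum_congr rfl
        intro j _; ring }
  have hinj : Function.Injective φ := by
    rw [injective_iff_map_eq_zero]
    intro x hx0
    have hxker : A.mulVec (x : Fin n → ℝ) = 0 := x.2
    ext i
    have h := key x hxker i
    have hφ : (∑ j, lam j * (x : Fin n → ℝ) j) = 0 := hx0
    rw [hφ] at h
    have hpos : (0:ℝ) < 1 + lam i := by linarith [hlam i]
    have : (x : Fin n → ℝ) i = 0 := by
      rcases mul_eq_zero.mp h with h1 | h1
      · exact absurd h1 (ne_of_gt hpos)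
      · exact h1
    simpa using this
  have hker : Module.finrank ℝ (LinearMap.ker A.mulVecLin) ≤ 1 := by
    have := LinearMap.finrank_le_finrank_of_injective hinj
    simpa using this
  refine ⟨?_, hker⟩
  have hrn : A.rank + Module.finrank ℝ (LinearMap.ker A.mulVecLin) = n := by
    rw [Matrix.rank]
    rw [LinearMap.finrank_range_add_finrank_ker]
    simp [Module.finrank_fintype_fun_eq_card]
  omega
end

section
/- Fix v̄ > 0, an index i, a vector χ* ∈ ℝ^{n-1} with nonnegative entries, and v* ∈ [0,v̄]^n such that v*_i + χ*·(v̄·1 - v*_{-i}) ≤ v̄, where 1 is the all-ones vector of length n-1. Let I = {j : v*_j < v̄}. Then for every v_{-i} ∈ [0,v̄]^{n-1}: max{v*_i + χ*·(v_{-i} - v*_{-i}), 0} ≤ v*_i + (v̄ - v*_i)·max{0, max_{j ∈ I, j≠i} (v_j - v*_j)/(v̄ - v*_j)}. -/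
theorem stmt7 (n : ℕ) (vbar : ℝ) (hvbar : 0 < vbar) (i : Fin n)
    (chi : Fin n → ℝ) (hchi : ∀ j, j ≠ i → 0 ≤ chi j)
    (vstar : Fin n → ℝ) (hvs : ∀ j, 0 ≤ vstar j ∧ vstar j ≤ vbar)
    (hcond : vstar i + ∑ j ∈ Finset.univ.erase i, chi j * (vbar - vstar j) ≤ vbar)
    (v : Fin n → ℝ) (hv : ∀ j, 0 ≤ v j ∧ v j ≤ vbar) :
    max (vstar i + ∑ j ∈ Finset.univ.erase i, chi j * (v j - vstar j)) 0 ≤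
      vstar i + (vbar - vstar i) *
        (((Finset.univ.erase i).filter (fun j => vstar j < vbar)).fold max 0
          (fun j => (v j - vstar j) / (vbar - vstar j))) := by
  set M := ((Finset.univ.erase i).filter (fun j => vstar j < vbar)).fold max 0
      (fun j => (v j - vstar j) / (vbar - vstar j)) with hM
  have hM0 : 0 ≤ M := by
    rw [hM, Finset.le_fold_max]; left; exact le_refl 0
  have hMmem : ∀ j ∈ (Finset.univ.erase i).filter (fun j => vstar j < vbar),
      (v j - vstar j) / (vbar - vstar j) ≤ M := by
    intro j hj
    rw [hM, Finset.le_fold_max]; right; exact ⟨j, hj, le_refl _⟩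
  have hterm : ∀ j ∈ Finset.univ.erase i,
      chi j * (v j - vstar j) ≤ chi j * (M * (vbar - vstar j)) := by
    intro j hj
    have hji : j ≠ i := Finset.ne_of_mem_erase hj
    refine mul_le_mul_of_nonneg_left ?_ (hchi j hji)
    rcases lt_or_eq_of_le (hvs j).2 with h | h
    · have hjf : j ∈ (Finset.univ.erase i).filter (fun j => vstar j < vbar) := by
        simp [hji, h]
      have := hMmem j hjf
      have hd : 0 < vbar - vstar j := by linarith
      calc v j - vstar j = (v j - vstar j) / (vbar - vstar j) * (vbar - vstar j) := by
            field_simp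
        _ ≤ M * (vbar - vstar j) := by
            exact mul_le_mul_of_nonneg_right this hd.le
    · have : v j - vstar j ≤ 0 := by have := (hv j).2; linarith
      have h2 : M * (vbar - vstar j) = 0 := by rw [← h]; ring
      linarith
  have hsum : ∑ j ∈ Finset.univ.erase i, chi j * (v j - vstar j) ≤
      M * ∑ j ∈ Finset.univ.erase i, chi j * (vbar - vstar j) := by
    rw [Finset.mul_sum]
    refine Finset.sum_le_sum ?_
    intro j hj
    have := hterm j hj
    linarith [this]
  have hcond' : ∑ j ∈ Finset.univ.erase i, chi j * (vbar - vstar j) ≤ vbar - vstar i := by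
    linarith
  have h1 : vstar i + ∑ j ∈ Finset.univ.erase i, chi j * (v j - vstar j) ≤
      vstar i + (vbar - vstar i) * M := by
    have := mul_le_mul_of_nonneg_left hcond' hM0
    nlinarith
  have h2 : (0:ℝ) ≤ vstar i + (vbar - vstar i) * M := by
    have := (hvs i).1
    have h3 : vstar i ≤ vbar := (hvs i).2
    nlinarith
  exact max_le h1 h2
end

section
/- Fix v̄ > 0 and m ∈ (0,v̄)^n with Σ_{i=1}^n √(1 - m_i/v̄) > n - 1. Then the vector λ* with λ*_i = √(v̄/(v̄ - m_i)) - 1 is the unique maximizer of f(λ) = Σ_{i=1}^n (m_i λ_i - λ_i² v̄/(1+λ_i)) over the set {λ ∈ ℝ^n : λ ≥ 0, Σ_{i=1}^n λ_i/(1+λ_i) ≤ 1}. -/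
lemma stmt9_aux (vbar mi x : ℝ) (hv : 0 < vbar) (hm1 : 0 < mi) (hm2 : mi < vbar) (hx : 0 ≤ x) :
    (mi * (Real.sqrt (vbar / (vbar - mi)) - 1) -
        (Real.sqrt (vbar / (vbar - mi)) - 1) ^ 2 * vbar / (1 + (Real.sqrt (vbar / (vbar - mi)) - 1)))
      - (mi * x - x ^ 2 * vbar / (1 + x))
    = vbar * (Real.sqrt (vbar / (vbar - mi)) - (1 + x)) ^ 2
        / ((Real.sqrt (vbar / (vbar - mi))) ^ 2 * (1 + x)) := by
  set c := Real.sqrt (vbar / (vbar - mi)) with hcdef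
  have hvm : 0 < vbar - mi := by linarith
  have hc2 : c ^ 2 = vbar / (vbar - mi) := Real.sq_sqrt (by positivity)
  have hc : 0 < c := Real.sqrt_pos.mpr (by positivity)
  have hx1 : 0 < 1 + x := by linarith
  have h1c : 1 + (c - 1) = c := by ring
  have hc0 : c ≠ 0 := ne_of_gt hc
  have hmi : mi = vbar - vbar / c ^ 2 := by
    rw [hc2]; field_simp; ring
  rw [h1c, hmi]
  field_simp
  ring

theorem stmt9 (n : ℕ) (vbar : ℝ) (hvbar : 0 < vbar)
    (m : Fin n → ℝ) (hm : ∀ i, 0 < m i ∧ m i < vbar)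
    (hlow : (n : ℝ) - 1 < ∑ i, Real.sqrt (1 - m i / vbar)) :
    let f : (Fin n → ℝ) → ℝ := fun lam => ∑ i, (m i * lam i - lam i ^ 2 * vbar / (1 + lam i))
    let lamstar : Fin n → ℝ := fun i => Real.sqrt (vbar / (vbar - m i)) - 1
    ((∀ i, 0 ≤ lamstar i) ∧ ∑ i, lamstar i / (1 + lamstar i) ≤ 1) ∧
    ∀ lam : Fin n → ℝ, (∀ i, 0 ≤ lam i) → (∑ i, lam i / (1 + lam i)) ≤ 1 →
      f lam ≤ f lamstar ∧ (f lam = f lamstar → lam = lamstar) := by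
  intro f lamstar
  have hvm : ∀ i, 0 < vbar - m i := fun i => by have := hm i; linarith
  have hc1 : ∀ i, 1 ≤ Real.sqrt (vbar / (vbar - m i)) := by
    intro i
    rw [show (1:ℝ) = Real.sqrt 1 by simp]
    apply Real.sqrt_le_sqrt
    rw [le_div_iff₀ (hvm i)]
    have := (hm i).1; linarith
  have hstar0 : ∀ i, 0 ≤ lamstar i := fun i => by
    simp only [lamstar]; linarith [hc1 i]
  have hfrac : ∀ i, lamstar i / (1 + lamstar i) = 1 - Real.sqrt (1 - m i / vbar) := by
    intro i
    have hc : 0 < Real.sqrt (vbar / (vbar - m i)) := lt_of_lt_of_le one_pos (hc1 i)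
    have hinv : (Real.sqrt (vbar / (vbar - m i)))⁻¹ = Real.sqrt (1 - m i / vbar) := by
      rw [← Real.sqrt_inv]
      congr 1
      field_simp
    simp only [lamstar]
    rw [show 1 + (Real.sqrt (vbar / (vbar - m i)) - 1) = Real.sqrt (vbar / (vbar - m i)) by ring]
    rw [sub_div, div_self (ne_of_gt hc), ← hinv, one_div]
  have hfeas : ∑ i, lamstar i / (1 + lamstar i) ≤ 1 := by
    calc ∑ i, lamstar i / (1 + lamstar i) = ∑ i, (1 - Real.sqrt (1 - m i / vbar)) := by
          exact Finset.sum_congr rfl (fun i _ => hfrac i)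
      _ = (n : ℝ) - ∑ i, Real.sqrt (1 - m i / vbar) := by
          rw [Finset.sum_sub_distrib]; simp
      _ ≤ 1 := by linarith
  refine ⟨⟨hstar0, hfeas⟩, ?_⟩
  intro lam hlam0 _
  have hkey : ∀ i, (m i * lamstar i - lamstar i ^ 2 * vbar / (1 + lamstar i))
      - (m i * lam i - lam i ^ 2 * vbar / (1 + lam i))
      = vbar * (Real.sqrt (vbar / (vbar - m i)) - (1 + lam i)) ^ 2
        / ((Real.sqrt (vbar / (vbar - m i))) ^ 2 * (1 + lam i)) := by
    intro i
    exact stmt9_aux vbar (m i) (lam i) hvbar (hm i).1 (hm i).2 (hlam0 i)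
  have hterm_nonneg : ∀ i ∈ Finset.univ, (0:ℝ) ≤
      vbar * (Real.sqrt (vbar / (vbar - m i)) - (1 + lam i)) ^ 2
        / ((Real.sqrt (vbar / (vbar - m i))) ^ 2 * (1 + lam i)) := by
    intro i _
    have hc : 0 < Real.sqrt (vbar / (vbar - m i)) := lt_of_lt_of_le one_pos (hc1 i)
    have hx1 : 0 < 1 + lam i := by linarith [hlam0 i]
    positivity
  have hdiff : f lamstar - f lam = ∑ i, vbar * (Real.sqrt (vbar / (vbar - m i)) - (1 + lam i)) ^ 2
      / ((Real.sqrt (vbar / (vbar - m i))) ^ 2 * (1 + lam i)) := by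
    simp only [f, ← Finset.sum_sub_distrib]
    exact Finset.sum_congr rfl (fun i _ => hkey i)
  have hsum_nonneg : 0 ≤ f lamstar - f lam := by
    rw [hdiff]; exact Finset.sum_nonneg hterm_nonneg
  constructor
  · linarith
  · intro heq
    have hzero : ∑ i, vbar * (Real.sqrt (vbar / (vbar - m i)) - (1 + lam i)) ^ 2
        / ((Real.sqrt (vbar / (vbar - m i))) ^ 2 * (1 + lam i)) = 0 := by
      rw [← hdiff]; linarith
    have hall := (Finset.sum_eq_zero_iff_of_nonneg hterm_nonneg).mp hzero
    funext i
    have hi := hall i (Finset.mem_univ i)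
    have hc : 0 < Real.sqrt (vbar / (vbar - m i)) := lt_of_lt_of_le one_pos (hc1 i)
    have hx1 : 0 < 1 + lam i := by linarith [hlam0 i]
    have hden : (0:ℝ) < (Real.sqrt (vbar / (vbar - m i))) ^ 2 * (1 + lam i) := by positivity
    have hnum : vbar * (Real.sqrt (vbar / (vbar - m i)) - (1 + lam i)) ^ 2 = 0 := by
      rcases div_eq_zero_iff.mp hi with h | h
      · exact h
      · exact absurd h (ne_of_gt hden)
    have : (Real.sqrt (vbar / (vbar - m i)) - (1 + lam i)) ^ 2 = 0 := by
      rcases mul_eq_zero.mp hnum with h | h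
      · exact absurd h (ne_of_gt hvbar)
      · exact h
    have := pow_eq_zero_iff (n := 2) (by norm_num) |>.mp this
    simp only [lamstar]
    linarith
end

section
/- Fix v̄ > 0, m ∈ (0,v̄)^n, and λ ∈ ℝ^n with λ ≥ 0 and Σ_{i=1}^n λ_i/(1+λ_i) ≥ 1. Then max_{r ∈ [0,v̄]^n} R(r,λ) = λ·m + v̄(1 - Σ_{i=1}^n λ_i), where R(r,λ) = λ·m + min{v̄(1-Σλ_i), min_i (r_i - Σ_{j≠i} λ_j r_j - λ_i v̄), -λ·r} if r > 0 componentwise, and R(r,λ) = λ·m + min{v̄(1-Σλ_i), min_i (r_i - Σ_{j≠i} λ_j r_j - λ_i v̄)} otherwise. -/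
theorem stmt11 (n : ℕ) (hn : 0 < n) (vbar : ℝ) (hvbar : 0 < vbar)
    (m lam : Fin n → ℝ) (hm : ∀ i, 0 < m i ∧ m i < vbar)
    (hlam : ∀ i, 0 ≤ lam i)
    (hgeq : 1 ≤ ∑ i, lam i / (1 + lam i)) :
    IsGreatest
      {x : ℝ | ∃ r : Fin n → ℝ, (∀ i, 0 ≤ r i ∧ r i ≤ vbar) ∧
        x = (∑ i, lam i * m i) +
          (if ∀ i, 0 < r i then
            min (min (vbar * (1 - ∑ i, lam i))
              (Finset.univ.inf' (Finset.univ_nonempty_iff.mpr (Fin.pos_iff_nonempty.mp hn))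
                (fun i => r i - (∑ j ∈ Finset.univ.erase i, lam j * r j) - lam i * vbar)))
            (-(∑ i, lam i * r i))
          else
            min (vbar * (1 - ∑ i, lam i))
              (Finset.univ.inf' (Finset.univ_nonempty_iff.mpr (Fin.pos_iff_nonempty.mp hn))
                (fun i => r i - (∑ j ∈ Finset.univ.erase i, lam j * r j) - lam i * vbar)))}
      ((∑ i, lam i * m i) + vbar * (1 - ∑ i, lam i)) := by
  have hpos : ∀ i, (0:ℝ) < 1 + lam i := fun i => by linarith [hlam i]
  set S := ∑ i, lam i with hS
  set T := ∑ i, lam i / (1 + lam i) with hT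
  constructor
  · refine ⟨fun i => lam i * vbar / (1 + lam i), fun i => ⟨div_nonneg (mul_nonneg (hlam i) hvbar.le) (hpos i).le, ?_⟩, ?_⟩
    · rw [div_le_iff₀ (hpos i)]
      nlinarith [hlam i]
    · congr 1
      have hlr : ∀ j, lam j * (lam j * vbar / (1 + lam j))
          = (lam j - lam j / (1 + lam j)) * vbar := by
        intro j
        field_simp [(hpos j).ne']
        ring
      have hsum : ∑ j, lam j * (lam j * vbar / (1 + lam j)) = (S - T) * vbar := by
        simp only [hlr]
        rw [← Finset.sum_mul, Finset.sum_sub_distrib]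
      have hargs : ∀ i : Fin n,
          (lam i * vbar / (1 + lam i)
            - (∑ j ∈ Finset.univ.erase i, lam j * (lam j * vbar / (1 + lam j)))
            - lam i * vbar) = (T - S) * vbar := by
        intro i
        rw [Finset.sum_erase_eq_sub (Finset.mem_univ i), hsum, hlr i]
        have : lam i * vbar / (1 + lam i) = (lam i / (1 + lam i)) * vbar := by ring
        rw [this]
        ring
      have hconst : (fun i : Fin n => lam i * vbar / (1 + lam i)
            - (∑ j ∈ Finset.univ.erase i, lam j * (lam j * vbar / (1 + lam j)))
            - lam i * vbar) = fun _ => (T - S) * vbar := funext hargs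
      have hinf : (Finset.univ.inf' (Finset.univ_nonempty_iff.mpr (Fin.pos_iff_nonempty.mp hn))
            (fun i : Fin n => lam i * vbar / (1 + lam i)
              - (∑ j ∈ Finset.univ.erase i, lam j * (lam j * vbar / (1 + lam j)))
              - lam i * vbar)) = (T - S) * vbar := by
        rw [hconst, Finset.inf'_const]
      have hge : vbar * (1 - S) ≤ (T - S) * vbar := by nlinarith
      split_ifs with h
      · rw [hinf, hsum, min_eq_left hge, min_eq_left]
        nlinarith
      · rw [hinf, min_eq_left hge]
  · rintro x ⟨r, hr, rfl⟩
    apply add_le_add_right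
    split_ifs with h
    · exact le_trans (min_le_left _ _) (min_le_left _ _)
    · exact min_le_left _ _
end

section
/- Fix v̄ > 0 and λ ∈ ℝ^n with λ ≥ 0 and Σ_{i=1}^n λ_i/(1+λ_i) ≤ 1. Define r*_i = λ_i v̄/(1+λ_i) and g(r) = min{min_i (r_i - Σ_{j≠i} λ_j r_j - λ_i v̄), -λ·r}. Then r* maximizes g over [0,v̄]^n, with optimal value g(r*) = -Σ_{i=1}^n λ_i² v̄/(1+λ_i). -/
theorem stmt12 (n : ℕ) (hn : 0 < n) (vbar : ℝ) (hvbar : 0 < vbar)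
    (lam : Fin n → ℝ) (hlam : ∀ i, 0 ≤ lam i)
    (hgeom : ∑ i, lam i / (1 + lam i) ≤ 1) :
    let g : (Fin n → ℝ) → ℝ := fun r =>
      min
        (Finset.univ.inf' (Finset.univ_nonempty_iff.mpr (Fin.pos_iff_nonempty.mp hn))
          (fun i => r i - (∑ j ∈ Finset.univ.erase i, lam j * r j) - lam i * vbar))
        (-(∑ i, lam i * r i))
    let rstar : Fin n → ℝ := fun i => lam i * vbar / (1 + lam i)
    (∀ r : Fin n → ℝ, (∀ i, 0 ≤ r i ∧ r i ≤ vbar) → g r ≤ g rstar) ∧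
    g rstar = -(∑ i, lam i ^ 2 * vbar / (1 + lam i)) := by
  intro g rstar
  have hpos : ∀ i, (0:ℝ) < 1 + lam i := fun i => by linarith [hlam i]
  have hne : ∀ i, (1 + lam i) ≠ 0 := fun i => (hpos i).ne'
  set S : ℝ := ∑ i, lam i ^ 2 * vbar / (1 + lam i) with hS
  have i0 : Fin n := ⟨0, hn⟩
  have hsumr : ∑ i, lam i * rstar i = S := by
    rw [hS]
    refine Finset.sum_congr rfl (fun i _ => ?_)
    show lam i * (lam i * vbar / (1 + lam i)) = _
    field_simp
  have hTstar : ∀ i, rstar i - (∑ j ∈ Finset.univ.erase i, lam j * rstar j) - lam i * vbar = -S := by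
    intro i
    rw [Finset.sum_erase_eq_sub (Finset.mem_univ i), hsumr]
    have h1 : (1 + lam i) * rstar i = lam i * vbar := by
      show (1 + lam i) * (lam i * vbar / (1 + lam i)) = lam i * vbar
      rw [mul_comm]
      exact div_mul_cancel₀ _ (hne i)
    linear_combination h1
  have hginf : g rstar = -S := by
    show min _ _ = -S
    have h1 : (Finset.univ.inf' (Finset.univ_nonempty_iff.mpr (Fin.pos_iff_nonempty.mp hn))
        (fun i => rstar i - (∑ j ∈ Finset.univ.erase i, lam j * rstar j) - lam i * vbar)) = -S := by
      apply le_antisymm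
      · exact (Finset.inf'_le _ (Finset.mem_univ i0)).trans_eq (hTstar i0)
      · exact Finset.le_inf' _ _ (fun i _ => (hTstar i).ge)
    rw [h1, hsumr, min_self]
  refine ⟨?_, hginf⟩
  intro r _
  rw [hginf]
  set L : ℝ := ∑ i, lam i * r i with hL
  set w : Fin n → ℝ := fun i => lam i / (1 + lam i) with hw
  set W : ℝ := ∑ i, w i with hW
  have hWle : W ≤ 1 := hgeom
  have hwnn : ∀ i, 0 ≤ w i := fun i => div_nonneg (hlam i) (hpos i).le
  set T : Fin n → ℝ := fun i => r i - (∑ j ∈ Finset.univ.erase i, lam j * r j) - lam i * vbar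
    with hT
  have hTle : ∀ i, g r ≤ T i := fun i =>
    (min_le_left _ _).trans (Finset.inf'_le _ (Finset.mem_univ i))
  have hLle : g r ≤ -L := min_le_right _ _
  have key : ∑ i, w i * T i + (1 - W) * (-L) = -S := by
    have e0 : ∀ i ∈ Finset.univ, w i * T i
        = lam i * r i - w i * L - lam i ^ 2 * vbar / (1 + lam i) := by
      intro i _
      have : T i = (1 + lam i) * r i - L - lam i * vbar := by
        show r i - (∑ j ∈ Finset.univ.erase i, lam j * r j) - lam i * vbar = _
        rw [Finset.sum_erase_eq_sub (Finset.mem_univ i)]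
        ring
      have hwl : w i * (1 + lam i) = lam i := div_mul_cancel₀ _ (hne i)
      have hwv : w i * (lam i * vbar) = lam i ^ 2 * vbar / (1 + lam i) := by
        rw [hw, div_mul_eq_mul_div]; ring_nf
      rw [this]
      linear_combination r i * hwl - hwv
    rw [Finset.sum_congr rfl e0]
    rw [Finset.sum_sub_distrib, Finset.sum_sub_distrib, ← Finset.sum_mul, ← hL, ← hW, ← hS]
    ring
  have h1 : ∑ i, w i * g r ≤ ∑ i, w i * T i :=
    Finset.sum_le_sum (fun i _ => mul_le_mul_of_nonneg_left (hTle i) (hwnn i))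
  have h3 : ∑ i, w i * g r = W * g r := by rw [← Finset.sum_mul]
  have h2 : (1 - W) * g r ≤ (1 - W) * (-L) :=
    mul_le_mul_of_nonneg_left hLle (by linarith)
  calc g r = W * g r + (1 - W) * g r := by ring
    _ ≤ ∑ i, w i * T i + (1 - W) * (-L) := add_le_add (h3 ▸ h1) h2
    _ = -S := key
end

section
/- Suppose r_1, r_2 ∈ [0,1], v̄ = 1, and consider the two-bidder second-price-style worst-case revenue function R(r,λ) = λ_1 m_1 + λ_2 m_2 + min{1-λ_1-λ_2, r_1 - λ_2 r_2 - λ_1, r_2 - λ_1 r_1 - λ_2, -λ_1 r_1 - λ_2 r_2} for r > 0. If √(1-m_1) + √(1-m_2) > 1, then the unique maximizer over (r, λ) with λ ≥ 0 has r_i = 1 - √(1-m_i) and λ_i = 1/√(1-m_i) - 1. -/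
private lemma key14 (m1 m2 r1 r2 l1 l2 u1 u2 u3 : ℝ) (hl1 : 0 ≤ l1) (hl2 : 0 ≤ l2)
    (h1 : 0 ≤ u1) (h2 : 0 ≤ u2) (h3 : 0 ≤ u3) (h4 : u1 + u2 + u3 ≤ 1)
    (hc1 : m1 ≤ u1 + u2 + (1 - u1 - u2) * r1)
    (hc2 : m2 ≤ u1 + u3 + (1 - u1 - u3) * r2) :
    l1 * m1 + l2 * m2 +
      min (min (1 - l1 - l2) (r1 - l2 * r2 - l1))
          (min (r2 - l1 * r1 - l2) (-(l1 * r1) - l2 * r2)) ≤ u1 + u2 * r1 + u3 * r2 := by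
  set M := min (min (1 - l1 - l2) (r1 - l2 * r2 - l1))
      (min (r2 - l1 * r1 - l2) (-(l1 * r1) - l2 * r2)) with hMdef
  have hM1 : M ≤ 1 - l1 - l2 := le_trans (min_le_left _ _) (min_le_left _ _)
  have hM2 : M ≤ r1 - l2 * r2 - l1 := le_trans (min_le_left _ _) (min_le_right _ _)
  have hM3 : M ≤ r2 - l1 * r1 - l2 := le_trans (min_le_right _ _) (min_le_left _ _)
  have hM4 : M ≤ -(l1 * r1) - l2 * r2 := le_trans (min_le_right _ _) (min_le_right _ _)
  nlinarith [mul_nonneg h1 (sub_nonneg.2 hM1), mul_nonneg h2 (sub_nonneg.2 hM2),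
    mul_nonneg h3 (sub_nonneg.2 hM3),
    mul_nonneg (by linarith : (0:ℝ) ≤ 1 - u1 - u2 - u3) (sub_nonneg.2 hM4),
    mul_nonneg hl1 (sub_nonneg.2 hc1), mul_nonneg hl2 (sub_nonneg.2 hc2)]

private lemma val14 (s r : ℝ) (hr : r < 1) : (1 - s ^ 2 - r) / (1 - r) * r ≤ (1 - s) ^ 2 := by
  rw [div_mul_eq_mul_div, div_le_iff₀ (by linarith : (0:ℝ) < 1 - r)]
  nlinarith [sq_nonneg (r - (1 - s))]

set_option maxHeartbeats 1000000 in
theorem stmt14 (m1 m2 : ℝ) (hm1 : 0 < m1 ∧ m1 < 1) (hm2 : 0 < m2 ∧ m2 < 1)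
    (hlow : 1 < Real.sqrt (1 - m1) + Real.sqrt (1 - m2)) :
    let R : ℝ → ℝ → ℝ → ℝ → ℝ := fun r1 r2 l1 l2 =>
      l1 * m1 + l2 * m2 +
        min (min (1 - l1 - l2) (r1 - l2 * r2 - l1))
            (min (r2 - l1 * r1 - l2) (-(l1 * r1) - l2 * r2))
    let r1s : ℝ := 1 - Real.sqrt (1 - m1)
    let r2s : ℝ := 1 - Real.sqrt (1 - m2)
    let l1s : ℝ := 1 / Real.sqrt (1 - m1) - 1
    let l2s : ℝ := 1 / Real.sqrt (1 - m2) - 1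
    (0 < r1s ∧ r1s ≤ 1 ∧ 0 < r2s ∧ r2s ≤ 1 ∧ 0 ≤ l1s ∧ 0 ≤ l2s) ∧
    ∀ r1 r2 l1 l2 : ℝ, 0 < r1 → r1 ≤ 1 → 0 < r2 → r2 ≤ 1 → 0 ≤ l1 → 0 ≤ l2 →
      R r1 r2 l1 l2 ≤ R r1s r2s l1s l2s ∧
      (R r1 r2 l1 l2 = R r1s r2s l1s l2s →
        r1 = r1s ∧ r2 = r2s ∧ l1 = l1s ∧ l2 = l2s) := by
  obtain ⟨hm10, hm11⟩ := hm1
  obtain ⟨hm20, hm21⟩ := hm2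
  intro R r1s r2s l1s l2s
  have hRdef : ∀ a b c d : ℝ, R a b c d = c * m1 + d * m2 +
      min (min (1 - c - d) (a - d * b - c))
          (min (b - c * a - d) (-(c * a) - d * b)) := fun _ _ _ _ => rfl
  have hr1s : r1s = 1 - Real.sqrt (1 - m1) := rfl
  have hr2s : r2s = 1 - Real.sqrt (1 - m2) := rfl
  have hl1s : l1s = 1 / Real.sqrt (1 - m1) - 1 := rfl
  have hl2s : l2s = 1 / Real.sqrt (1 - m2) - 1 := rfl
  have hs1sq : Real.sqrt (1 - m1) ^ 2 = 1 - m1 := Real.sq_sqrt (by linarith)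
  have hs2sq : Real.sqrt (1 - m2) ^ 2 = 1 - m2 := Real.sq_sqrt (by linarith)
  have hs1pos : 0 < Real.sqrt (1 - m1) := Real.sqrt_pos.2 (by linarith)
  have hs2pos : 0 < Real.sqrt (1 - m2) := Real.sqrt_pos.2 (by linarith)
  clear_value R r1s r2s l1s l2s
  set s1 := Real.sqrt (1 - m1) with hs1d
  set s2 := Real.sqrt (1 - m2) with hs2d
  clear hs1d hs2d
  clear_value s1 s2
  have hm1e : m1 = 1 - s1 ^ 2 := by linarith
  have hm2e : m2 = 1 - s2 ^ 2 := by linarith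
  clear hs1sq hs2sq
  subst hm1e hm2e
  have hs1lt : s1 < 1 := by nlinarith
  have hs2lt : s2 < 1 := by nlinarith
  have hi1 : 1 / s1 * s1 = 1 := by field_simp
  have hi2 : 1 / s2 * s2 = 1 := by field_simp
  have hl1sval : l1s * s1 = 1 - s1 := by rw [hl1s]; field_simp
  have hl2sval : l2s * s2 = 1 - s2 := by rw [hl2s]; field_simp
  -- value at the star point
  have hA : R r1s r2s l1s l2s = (1 - s1) ^ 2 + (1 - s2) ^ 2 := by
    rw [hRdef, hr1s, hr2s, hl1s, hl2s]
    have e2 : (1 - s1) - (1 / s2 - 1) * (1 - s2) - (1 / s1 - 1)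
        = -((1 / s1 - 1) * (1 - s1)) - (1 / s2 - 1) * (1 - s2) := by
      field_simp; ring
    have e3 : (1 - s2) - (1 / s1 - 1) * (1 - s1) - (1 / s2 - 1)
        = -((1 / s1 - 1) * (1 - s1)) - (1 / s2 - 1) * (1 - s2) := by
      field_simp; ring
    have e14 : -((1 / s1 - 1) * (1 - s1)) - (1 / s2 - 1) * (1 - s2)
        ≤ 1 - (1 / s1 - 1) - (1 / s2 - 1) := by nlinarith [hi1, hi2]
    rw [e2, e3, min_self, min_eq_right (le_min e14 le_rfl)]
    field_simp
    ring
  refine ⟨⟨by rw [hr1s]; linarith, by rw [hr1s]; linarith, by rw [hr2s]; linarith,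
      by rw [hr2s]; linarith,
      by rw [hl1s]; nlinarith [hi1], by rw [hl2s]; nlinarith [hi2]⟩, ?_⟩
  intro r1 r2 l1 l2 hr10 hr11 hr20 hr21 hl10 hl20
  rw [hA]
  have hRx : R r1 r2 l1 l2 = l1 * (1 - s1 ^ 2) + l2 * (1 - s2 ^ 2) +
      min (min (1 - l1 - l2) (r1 - l2 * r2 - l1))
          (min (r2 - l1 * r1 - l2) (-(l1 * r1) - l2 * r2)) := hRdef r1 r2 l1 l2
  have hApos1 : (0:ℝ) < (1 - s1) ^ 2 := pow_pos (by linarith) 2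
  have hApos2 : (0:ℝ) < (1 - s2) ^ 2 := pow_pos (by linarith) 2
  rcases le_or_gt (1 - s1 ^ 2) r1 with hc1 | hc1
  · rcases le_or_gt (1 - s2 ^ 2) r2 with hc2 | hc2
    · -- both reserves above means: R ≤ 0 < A
      have hb : R r1 r2 l1 l2 ≤ 0 + 0 * r1 + 0 * r2 := by
        rw [hRx]
        exact key14 _ _ _ _ _ _ _ _ _ hl10 hl20 le_rfl le_rfl le_rfl (by norm_num)
          (by linarith) (by linarith)
      have hlt : R r1 r2 l1 l2 < (1 - s1) ^ 2 + (1 - s2) ^ 2 := by linarith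
      exact ⟨le_of_lt hlt, fun h => absurd h (ne_of_lt hlt)⟩
    · -- r1 high, r2 low
      have ha2 : (0:ℝ) < 1 - r2 := by linarith [sq_nonneg s2]
      have hy0 : (0:ℝ) ≤ (1 - s2 ^ 2 - r2) / (1 - r2) := div_nonneg (by linarith) ha2.le
      have hy1 : (1 - s2 ^ 2 - r2) / (1 - r2) ≤ 1 := by
        rw [div_le_one ha2]; linarith [sq_nonneg s2]
      have hye : (1 - s2 ^ 2 - r2) / (1 - r2) * (1 - r2) = 1 - s2 ^ 2 - r2 :=
        div_mul_cancel₀ _ (ne_of_gt ha2)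
      have hb : R r1 r2 l1 l2 ≤ 0 + 0 * r1 + (1 - s2 ^ 2 - r2) / (1 - r2) * r2 := by
        rw [hRx]
        exact key14 _ _ _ _ _ _ _ _ _ hl10 hl20 le_rfl le_rfl hy0 (by linarith)
          (by linarith) (by linarith [hye])
      have hv2 : (1 - s2 ^ 2 - r2) / (1 - r2) * r2 ≤ (1 - s2) ^ 2 := val14 s2 r2 (by linarith)
      have hlt : R r1 r2 l1 l2 < (1 - s1) ^ 2 + (1 - s2) ^ 2 := by linarith
      exact ⟨le_of_lt hlt, fun h => absurd h (ne_of_lt hlt)⟩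
  · rcases le_or_gt (1 - s2 ^ 2) r2 with hc2 | hc2
    · -- r1 low, r2 high
      have ha1 : (0:ℝ) < 1 - r1 := by linarith [sq_nonneg s1]
      have hx0 : (0:ℝ) ≤ (1 - s1 ^ 2 - r1) / (1 - r1) := div_nonneg (by linarith) ha1.le
      have hx1 : (1 - s1 ^ 2 - r1) / (1 - r1) ≤ 1 := by
        rw [div_le_one ha1]; linarith [sq_nonneg s1]
      have hxe : (1 - s1 ^ 2 - r1) / (1 - r1) * (1 - r1) = 1 - s1 ^ 2 - r1 :=
        div_mul_cancel₀ _ (ne_of_gt ha1)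
      have hb : R r1 r2 l1 l2 ≤ 0 + (1 - s1 ^ 2 - r1) / (1 - r1) * r1 + 0 * r2 := by
        rw [hRx]
        exact key14 _ _ _ _ _ _ _ _ _ hl10 hl20 le_rfl hx0 le_rfl (by linarith)
          (by linarith [hxe]) (by linarith)
      have hv1 : (1 - s1 ^ 2 - r1) / (1 - r1) * r1 ≤ (1 - s1) ^ 2 := val14 s1 r1 (by linarith)
      have hlt : R r1 r2 l1 l2 < (1 - s1) ^ 2 + (1 - s2) ^ 2 := by linarith
      exact ⟨le_of_lt hlt, fun h => absurd h (ne_of_lt hlt)⟩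
    · -- both reserves low
      have ha1 : (0:ℝ) < 1 - r1 := by linarith [sq_nonneg s1]
      have ha2 : (0:ℝ) < 1 - r2 := by linarith [sq_nonneg s2]
      set x := (1 - s1 ^ 2 - r1) / (1 - r1) with hxdef
      set y := (1 - s2 ^ 2 - r2) / (1 - r2) with hydef
      set q := s1 ^ 2 / (1 - r1) with hqdef
      set p := s2 ^ 2 / (1 - r2) with hpdef
      have hx0 : (0:ℝ) < x := by rw [hxdef]; exact div_pos (by linarith) ha1
      have hy0 : (0:ℝ) < y := by rw [hydef]; exact div_pos (by linarith) ha2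
      have hxe : x * (1 - r1) = 1 - s1 ^ 2 - r1 := by
        rw [hxdef]; exact div_mul_cancel₀ _ (ne_of_gt ha1)
      have hye : y * (1 - r2) = 1 - s2 ^ 2 - r2 := by
        rw [hydef]; exact div_mul_cancel₀ _ (ne_of_gt ha2)
      have hqe : q * (1 - r1) = s1 ^ 2 := by
        rw [hqdef]; exact div_mul_cancel₀ _ (ne_of_gt ha1)
      have hpe : p * (1 - r2) = s2 ^ 2 := by
        rw [hpdef]; exact div_mul_cancel₀ _ (ne_of_gt ha2)
      have hq0 : (0:ℝ) < q := by rw [hqdef]; positivity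
      have hp0 : (0:ℝ) < p := by rw [hpdef]; positivity
      have hxq : x = 1 - q := by
        have h : x * (1 - r1) = (1 - q) * (1 - r1) := by linarith [hxe, hqe]
        exact mul_right_cancel₀ (ne_of_gt ha1) h
      have hyp : y = 1 - p := by
        have h : y * (1 - r2) = (1 - p) * (1 - r2) := by linarith [hye, hpe]
        exact mul_right_cancel₀ (ne_of_gt ha2) h
      rcases le_or_gt (x + y) 1 with hxy | hxy
      · -- main region
        have hb : R r1 r2 l1 l2 ≤ 0 + x * r1 + y * r2 := by
          rw [hRx]
          exact key14 _ _ _ _ _ _ _ _ _ hl10 hl20 le_rfl hx0.le hy0.le (by linarith)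
            (by linarith [hxe]) (by linarith [hye])
        have hv1 : x * r1 ≤ (1 - s1) ^ 2 := by rw [hxdef]; exact val14 s1 r1 (by linarith)
        have hv2 : y * r2 ≤ (1 - s2) ^ 2 := by rw [hydef]; exact val14 s2 r2 (by linarith)
        constructor
        · linarith
        · intro he
          have hxr1 : x * r1 = (1 - s1) ^ 2 := by linarith
          have hyr2 : y * r2 = (1 - s2) ^ 2 := by linarith
          have hr1e : r1 = 1 - s1 := by
            have hsq : (r1 - (1 - s1)) ^ 2 = 0 := by
              linear_combination r1 * hxe + (r1 - 1) * hxr1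
            have := sq_eq_zero_iff.mp hsq
            linarith
          have hr2e : r2 = 1 - s2 := by
            have hsq : (r2 - (1 - s2)) ^ 2 = 0 := by
              linear_combination r2 * hye + (r2 - 1) * hyr2
            have := sq_eq_zero_iff.mp hsq
            linarith
          have hxv : x = 1 - s1 := by
            have h : x * s1 = (1 - s1) * s1 := by
              rw [hr1e] at hxe; linear_combination hxe
            exact mul_right_cancel₀ (ne_of_gt hs1pos) h
          have hyv : y = 1 - s2 := by
            have h : y * s2 = (1 - s2) * s2 := by
              rw [hr2e] at hye; linear_combination hye
            exact mul_right_cancel₀ (ne_of_gt hs2pos) h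
          have hw0 : (0:ℝ) < 1 - x - y := by rw [hxv, hyv]; linarith
          set M := min (min (1 - l1 - l2) (r1 - l2 * r2 - l1))
              (min (r2 - l1 * r1 - l2) (-(l1 * r1) - l2 * r2)) with hMdef
          have hq2 : M ≤ r1 - l2 * r2 - l1 := le_trans (min_le_left _ _) (min_le_right _ _)
          have hq3 : M ≤ r2 - l1 * r1 - l2 := le_trans (min_le_right _ _) (min_le_left _ _)
          have hq4 : M ≤ -(l1 * r1) - l2 * r2 := le_trans (min_le_right _ _) (min_le_right _ _)
          have hMeq : l1 * (1 - s1 ^ 2) + l2 * (1 - s2 ^ 2) + M = x * r1 + y * r2 := by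
            rw [← hRx]; linarith [he]
          have hsum0 : x * ((r1 - l2 * r2 - l1) - M) + y * ((r2 - l1 * r1 - l2) - M)
              + (1 - x - y) * ((-(l1 * r1) - l2 * r2) - M) = 0 := by
            linear_combination -hMeq - l1 * hxe - l2 * hye
          have hn2 : 0 ≤ x * (r1 - l2 * r2 - l1 - M) := mul_nonneg hx0.le (by linarith)
          have hn3 : 0 ≤ y * (r2 - l1 * r1 - l2 - M) := mul_nonneg hy0.le (by linarith)
          have hn4 : 0 ≤ (1 - x - y) * (-(l1 * r1) - l2 * r2 - M) := mul_nonneg hw0.le (by linarith)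
          have hp2 : x * (r1 - l2 * r2 - l1 - M) = 0 := by linarith
          have hp3 : y * (r2 - l1 * r1 - l2 - M) = 0 := by linarith
          have hp4 : (1 - x - y) * (-(l1 * r1) - l2 * r2 - M) = 0 := by linarith
          have e2 : r1 - l2 * r2 - l1 - M = 0 :=
            (mul_eq_zero.1 hp2).resolve_left (ne_of_gt hx0)
          have e3 : r2 - l1 * r1 - l2 - M = 0 :=
            (mul_eq_zero.1 hp3).resolve_left (ne_of_gt hy0)
          have e4 : -(l1 * r1) - l2 * r2 - M = 0 :=
            (mul_eq_zero.1 hp4).resolve_left (ne_of_gt hw0)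
          have hl1v : l1 * (1 - r1) = r1 := by linarith [e2, e4]
          have hl2v : l2 * (1 - r2) = r2 := by linarith [e3, e4]
          have hl1f : l1 = l1s := by
            have h : l1 * s1 = l1s * s1 := by
              rw [hr1e] at hl1v; rw [hl1sval]; linarith [hl1v]
            exact mul_right_cancel₀ (ne_of_gt hs1pos) h
          have hl2f : l2 = l2s := by
            have h : l2 * s2 = l2s * s2 := by
              rw [hr2e] at hl2v; rw [hl2sval]; linarith [hl2v]
            exact mul_right_cancel₀ (ne_of_gt hs2pos) h
          exact ⟨by rw [hr1s]; exact hr1e, by rw [hr2s]; exact hr2e, hl1f, hl2f⟩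
      · -- AM-GM region
        have hu1 : (0:ℝ) < 1 - p - q := by rw [hxq] at hxy; rw [hyp] at hxy; linarith
        have hAM : 2 * s1 * s2 ≤ p * (1 - r1) + q * (1 - r2) := by
          rw [hpdef, hqdef, div_mul_eq_mul_div, div_mul_eq_mul_div,
            div_add_div _ _ (ne_of_gt ha2) (ne_of_gt ha1), le_div_iff₀ (mul_pos ha2 ha1)]
          linarith [sq_nonneg (s2 * (1 - r1) - s1 * (1 - r2))]
        have hb : R r1 r2 l1 l2 ≤ (1 - p - q) + p * r1 + q * r2 := by
          rw [hRx]
          exact key14 _ _ _ _ _ _ _ _ _ hl10 hl20 hu1.le hp0.le hq0.le (by linarith)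
            (by linarith [hqe]) (by linarith [hpe])
        have hpow : (0:ℝ) < (s1 + s2 - 1) ^ 2 := pow_pos (by linarith) 2
        have hlt : R r1 r2 l1 l2 < (1 - s1) ^ 2 + (1 - s2) ^ 2 := by
          linarith [hAM, hpow, hb]
        exact ⟨le_of_lt hlt, fun h => absurd h (ne_of_lt hlt)⟩
end

section
/- Fix v̄ > 0 and 0 < m_1 ≤ m_2 ≤ ... ≤ m_n < v̄ with Σ_{i=1}^n √(1 - m_i/v̄) ≤ n-1 and n ≥ 2. Define k* = min{k ≤ n-1 : Σ_{i=k+1}^n √(v̄-m_i)/√(v̄-m_k) > n-k-1} and λ*_i = 0 for i < k*, λ*_i = (Σ_{j=k*}^n √(v̄-m_j)/(n-k*))/√(v̄-m_i) - 1 for i ≥ k*. Then λ* satisfies Σ_{i=1}^n λ*_i/(1+λ*_i) = 1, λ*_i ≥ 0 for all i, and λ*_i > 0 for i ≥ k*. -/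
theorem stmt19 (n : ℕ) (hn : 2 ≤ n) (vbar : ℝ) (hvbar : 0 < vbar)
    (m : ℕ → ℝ) (hm : ∀ i ∈ Finset.Icc 1 n, 0 < m i ∧ m i < vbar)
    (hmono : ∀ i j, 1 ≤ i → i ≤ j → j ≤ n → m i ≤ m j)
    (hhigh : ∑ i ∈ Finset.Icc 1 n, Real.sqrt (1 - m i / vbar) ≤ (n : ℝ) - 1)
    (kstar : ℕ)
    (hk1 : kstar ∈ Finset.Icc 1 (n - 1) ∧
      (n : ℝ) - kstar - 1 <
        ∑ i ∈ Finset.Icc (kstar + 1) n, Real.sqrt (vbar - m i) / Real.sqrt (vbar - m kstar))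
    (hk2 : ∀ k ∈ Finset.Icc 1 (n - 1),
      (n : ℝ) - k - 1 <
        ∑ i ∈ Finset.Icc (k + 1) n, Real.sqrt (vbar - m i) / Real.sqrt (vbar - m k) →
      kstar ≤ k)
    (lamstar : ℕ → ℝ)
    (hls1 : ∀ i ∈ Finset.Icc 1 n, i < kstar → lamstar i = 0)
    (hls2 : ∀ i ∈ Finset.Icc 1 n, kstar ≤ i →
      lamstar i = (∑ j ∈ Finset.Icc kstar n, Real.sqrt (vbar - m j)) / ((n : ℝ) - kstar)
        / Real.sqrt (vbar - m i) - 1) :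
    (∑ i ∈ Finset.Icc 1 n, lamstar i / (1 + lamstar i)) = 1 ∧
    (∀ i ∈ Finset.Icc 1 n, 0 ≤ lamstar i) ∧
    (∀ i ∈ Finset.Icc 1 n, kstar ≤ i → 0 < lamstar i) := by
  obtain ⟨hk1a, hk1b⟩ := hk1
  rw [Finset.mem_Icc] at hk1a
  obtain ⟨hk_ge, hk_le⟩ := hk1a
  have hkn' : kstar < n := by omega
  set s : ℕ → ℝ := fun i => Real.sqrt (vbar - m i) with hs
  have hspos : ∀ i ∈ Finset.Icc 1 n, 0 < s i := fun i hi =>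
    Real.sqrt_pos.mpr (by linarith [(hm i hi).2])
  have hsmono : ∀ i j, 1 ≤ i → i ≤ j → j ≤ n → s j ≤ s i := fun i j h1 h2 h3 =>
    Real.sqrt_le_sqrt (by linarith [hmono i j h1 h2 h3])
  set S := ∑ j ∈ Finset.Icc kstar n, s j with hS
  have hkmem : kstar ∈ Finset.Icc 1 n := Finset.mem_Icc.mpr ⟨hk_ge, by omega⟩
  have hsk : 0 < s kstar := hspos kstar hkmem
  have hnk : (0:ℝ) < (n:ℝ) - kstar := by
    have : (kstar:ℝ) < n := by exact_mod_cast hkn'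
    linarith
  have hsplit : S = s kstar + ∑ j ∈ Finset.Icc (kstar+1) n, s j := by
    rw [hS, Finset.Icc_eq_cons_Ioc (le_of_lt hkn'), Finset.sum_cons, Finset.Icc_add_one_left_eq_Ioc]
  have hTineq : ((n:ℝ) - kstar - 1) * s kstar < ∑ i ∈ Finset.Icc (kstar+1) n, s i := by
    have h := hk1b
    rw [← Finset.sum_div] at h
    have h2 := mul_lt_mul_of_pos_right h hsk
    rwa [div_mul_cancel₀ _ (ne_of_gt hsk)] at h2
  have hSkey : ((n:ℝ) - kstar) * s kstar < S := by
    rw [hsplit]; nlinarith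
  have hSpos : 0 < S := lt_trans (by positivity) hSkey
  have hlam : ∀ i ∈ Finset.Icc 1 n, kstar ≤ i → ((n:ℝ) - kstar) * s i < S := by
    intro i hi hki
    rw [Finset.mem_Icc] at hi
    have hle : s i ≤ s kstar := hsmono kstar i hk_ge hki hi.2
    nlinarith
  have hpos : ∀ i ∈ Finset.Icc 1 n, kstar ≤ i → 0 < lamstar i := by
    intro i hi hki
    rw [hls2 i hi hki]
    have hsi := hspos i hi
    have hkey := hlam i hi hki
    rw [div_div, sub_pos, lt_div_iff₀ (by positivity)]
    linarith
  have hnonneg : ∀ i ∈ Finset.Icc 1 n, 0 ≤ lamstar i := by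
    intro i hi
    rcases lt_or_ge i kstar with h | h
    · rw [hls1 i hi h]
    · exact (hpos i hi h).le
  refine ⟨?_, hnonneg, hpos⟩
  have hterm : ∀ i ∈ Finset.Icc kstar n, lamstar i / (1 + lamstar i)
      = 1 - ((n:ℝ) - kstar) * s i / S := by
    intro i hi
    rw [Finset.mem_Icc] at hi
    have hi' : i ∈ Finset.Icc 1 n := Finset.mem_Icc.mpr ⟨le_trans hk_ge hi.1, hi.2⟩
    have hsi := hspos i hi'
    rw [hls2 i hi' hi.1, div_div]
    have hne : ((n:ℝ) - kstar) * s i ≠ 0 := by positivity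
    have h1 : 1 + (S / (((n:ℝ) - kstar) * s i) - 1) = S / (((n:ℝ) - kstar) * s i) := by ring
    rw [h1]
    field_simp
    rw [show √(vbar - m i) = s i from rfl, sub_mul, div_mul_cancel₀ _ (ne_of_gt hsi)]
  have hsplit2 : (∑ i ∈ Finset.Icc 1 n, lamstar i / (1 + lamstar i))
      = (∑ i ∈ Finset.Icc 1 (kstar-1), lamstar i / (1 + lamstar i))
        + ∑ i ∈ Finset.Icc kstar n, lamstar i / (1 + lamstar i) := by
    have e1 : Finset.Icc 1 n = Finset.Ioc 0 n := by rw [← Finset.Icc_add_one_left_eq_Ioc]; rfl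
    have e2 : Finset.Icc 1 (kstar-1) = Finset.Ioc 0 (kstar-1) := by rw [← Finset.Icc_add_one_left_eq_Ioc]; rfl
    have e3 : Finset.Icc kstar n = Finset.Ioc (kstar-1) n := by
      rw [← Finset.Icc_add_one_left_eq_Ioc]; congr 1; omega
    rw [e1, e2, e3, Finset.sum_Ioc_consecutive _ (by omega) (by omega)]
  have hzero : (∑ i ∈ Finset.Icc 1 (kstar-1), lamstar i / (1 + lamstar i)) = 0 := by
    apply Finset.sum_eq_zero
    intro i hi
    rw [Finset.mem_Icc] at hi
    have hi' : i ∈ Finset.Icc 1 n := Finset.mem_Icc.mpr ⟨hi.1, by omega⟩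
    simp [hls1 i hi' (by omega)]
  rw [hsplit2, hzero, zero_add, Finset.sum_congr rfl hterm, Finset.sum_sub_distrib]
  have hsum_s : ∑ i ∈ Finset.Icc kstar n, ((n:ℝ) - kstar) * s i / S = (n:ℝ) - kstar := by
    have : ∀ i, ((n:ℝ) - kstar) * s i / S = (((n:ℝ) - kstar) / S) * s i := fun i => by ring
    simp_rw [this]
    rw [← Finset.mul_sum, ← hS, div_mul_cancel₀ _ (ne_of_gt hSpos)]
  rw [hsum_s, Finset.sum_const, Nat.card_Icc]
  have : ((n + 1 - kstar : ℕ) : ℝ) = (n:ℝ) + 1 - kstar := by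
    have : kstar ≤ n + 1 := by omega
    push_cast [Nat.cast_sub this]
    ring
  rw [nsmul_eq_mul, this]
  ring
end
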